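/- The centralizer of ι(U(3)) in USp(6) equals U(1)₃ (which is contained in ι(U(3))), and the normalizer of ι(U(3)) in USp(6) equals the union ι(U(3)) ∪ J·ι(U(3)); in particular the normalizer of ι(U(3)) contains ι(U(3)) as a subgroup of index 2. -/

import Mathlib

noncomputable section

open Matrix

abbrev M6 := Matrix (Fin 3 ⊕ Fin 3) (Fin 3 ⊕ Fin 3) ℂ

/-- The matrix J = [[0, I₃], [−I₃, 0]]. -/
def J6 : M6 := Matrix.fromBlocks 0 1 (-1) 0

/-- USp(6): the set of 6×6 complex matrices that are unitary and satisfy Aᵀ·J·A = J. -/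
def USp6set : Set M6 :=
  {A | A ∈ Matrix.unitaryGroup (Fin 3 ⊕ Fin 3) ℂ ∧ Aᵀ * J6 * A = J6}

/-- ι(A) = diag(A, conj(A)). -/
def iotaM (A : Matrix (Fin 3) (Fin 3) ℂ) : M6 :=
  Matrix.fromBlocks A 0 0 (A.map (starRingEnd ℂ))

/-- ι(U(3)) : the image of the 3×3 unitary group under ι. -/
def iotaU3 : Set M6 :=
  {M | ∃ A ∈ Matrix.unitaryGroup (Fin 3) ℂ, M = iotaM A}

/-- U(1)₃ = {diag(u·I₃, conj(u)·I₃) : |u| = 1}. -/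
def U13 : Set M6 :=
  {M | ∃ u : ℂ, ‖u‖ = 1 ∧
    M = Matrix.fromBlocks (u • 1) 0 0 ((starRingEnd ℂ u) • 1)}


lemma conj_conj_mat (A : Matrix (Fin 3) (Fin 3) ℂ) :
    (A.map (starRingEnd ℂ)).map (starRingEnd ℂ) = A := by
  ext i j; simp [Matrix.map_apply]

lemma mapc_CT (A : Matrix (Fin 3) (Fin 3) ℂ) :
    (A.map (starRingEnd ℂ))ᴴ = Aᴴ.map (starRingEnd ℂ) := by
  ext i j; simp [Matrix.conjTranspose_apply, Matrix.map_apply]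

lemma iota_mul (A B : Matrix (Fin 3) (Fin 3) ℂ) : iotaM A * iotaM B = iotaM (A * B) := by
  simp [iotaM, Matrix.fromBlocks_multiply, Matrix.map_mul]

lemma iota_one : iotaM 1 = 1 := by
  simp [iotaM, Matrix.fromBlocks_one]

lemma star_iota (A : Matrix (Fin 3) (Fin 3) ℂ) : star (iotaM A) = iotaM (star A) := by
  show (iotaM A)ᴴ = _
  rw [iotaM, Matrix.fromBlocks_conjTranspose, mapc_CT]
  simp [iotaM, Matrix.star_eq_conjTranspose]

lemma J6_sq : J6 * J6 = -1 := by
  simp [J6, Matrix.fromBlocks_multiply]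
  rw [← Matrix.fromBlocks_one, Matrix.fromBlocks_neg]
  simp

lemma J6_transpose : J6ᵀ = -J6 := by
  rw [J6, Matrix.fromBlocks_transpose, Matrix.fromBlocks_neg]
  simp

lemma star_J6 : star J6 = -J6 := by
  rw [Matrix.star_eq_conjTranspose, J6, Matrix.fromBlocks_conjTranspose, Matrix.fromBlocks_neg]
  simp

lemma J6_unitary : J6 ∈ Matrix.unitaryGroup (Fin 3 ⊕ Fin 3) ℂ := by
  rw [Matrix.mem_unitaryGroup_iff, star_J6]
  rw [mul_neg, J6_sq, neg_neg]

lemma iota_unitary {A : Matrix (Fin 3) (Fin 3) ℂ} (hA : A ∈ Matrix.unitaryGroup (Fin 3) ℂ) :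
    iotaM A ∈ Matrix.unitaryGroup (Fin 3 ⊕ Fin 3) ℂ := by
  rw [Matrix.mem_unitaryGroup_iff] at hA ⊢
  rw [star_iota, iota_mul, hA, iota_one]

lemma mapc_eq (A : Matrix (Fin 3) (Fin 3) ℂ) : A.map (starRingEnd ℂ) = Aᴴᵀ := by
  ext i j; simp [Matrix.conjTranspose_apply, Matrix.map_apply]

lemma transpose_mul_conj {A : Matrix (Fin 3) (Fin 3) ℂ}
    (hA : A ∈ Matrix.unitaryGroup (Fin 3) ℂ) :
    Aᵀ * A.map (starRingEnd ℂ) = 1 ∧ A.map (starRingEnd ℂ) * Aᵀ = 1 := by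
  have h1 := Matrix.mem_unitaryGroup_iff'.1 hA
  have h2 := Matrix.mem_unitaryGroup_iff.1 hA
  rw [Matrix.star_eq_conjTranspose] at h1 h2
  constructor
  · rw [mapc_eq, ← Matrix.transpose_mul, h1, Matrix.transpose_one]
  · rw [mapc_eq, ← Matrix.transpose_mul, h2, Matrix.transpose_one]

lemma iota_symp {A : Matrix (Fin 3) (Fin 3) ℂ} (hA : A ∈ Matrix.unitaryGroup (Fin 3) ℂ) :
    (iotaM A)ᵀ * J6 * iotaM A = J6 := by
  obtain ⟨h1, h2⟩ := transpose_mul_conj hA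
  have h3 : Aᴴ * A = 1 := by
    rw [← Matrix.star_eq_conjTranspose]; exact Matrix.mem_unitaryGroup_iff'.1 hA
  rw [iotaM, J6, Matrix.fromBlocks_transpose, Matrix.fromBlocks_multiply,
    Matrix.fromBlocks_multiply]
  rw [mapc_eq] at h1 h2
  simp [h1, h2, mapc_eq, Matrix.transpose_transpose, h3]


lemma J6_USp : J6 ∈ USp6set := by
  refine ⟨J6_unitary, ?_⟩
  rw [J6_transpose, neg_mul, neg_mul, J6_sq]; simp

lemma USp6_mul {g h : M6} (hg : g ∈ USp6set) (hh : h ∈ USp6set) : g * h ∈ USp6set := by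
  refine ⟨mul_mem hg.1 hh.1, ?_⟩
  rw [Matrix.transpose_mul,
    show hᵀ * gᵀ * J6 * (g * h) = hᵀ * (gᵀ * J6 * g * h) by simp only [mul_assoc],
    hg.2, ← mul_assoc, hh.2]

lemma smul_one_map (c : ℂ) :
    ((c • (1 : Matrix (Fin 3) (Fin 3) ℂ)).map (starRingEnd ℂ)) = (starRingEnd ℂ c) • 1 := by
  ext i j
  by_cases h : i = j <;> simp [Matrix.map_apply, Matrix.one_apply, h]

lemma zI_eq : iotaM (Complex.I • 1) =
    Matrix.fromBlocks (Complex.I • 1) 0 0 ((-Complex.I) • 1) := by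
  rw [iotaM, smul_one_map]
  simp

lemma smul_one_unitary {c : ℂ} (hc : c * (starRingEnd ℂ c) = 1) :
    c • (1 : Matrix (Fin 3) (Fin 3) ℂ) ∈ Matrix.unitaryGroup (Fin 3) ℂ := by
  rw [Matrix.mem_unitaryGroup_iff, star_smul, star_one, smul_mul_smul_comm, one_mul]
  rw [show star c = starRingEnd ℂ c from rfl, hc, one_smul]

lemma block_diag_of_comm_zI {g : M6}
    (hc : g * iotaM (Complex.I • 1) = iotaM (Complex.I • 1) * g) :
    g = Matrix.fromBlocks g.toBlocks₁₁ 0 0 g.toBlocks₂₂ := by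
  have hg := (Matrix.fromBlocks_toBlocks g).symm
  rw [hg, zI_eq, Matrix.fromBlocks_multiply, Matrix.fromBlocks_multiply] at hc
  simp only [Matrix.fromBlocks_inj] at hc
  obtain ⟨-, h12, h21, -⟩ := hc
  simp only [Matrix.mul_zero, Matrix.zero_mul, add_zero, zero_add, Matrix.mul_smul,
    Matrix.smul_mul, mul_one, one_mul] at h12 h21
  have hQ : g.toBlocks₁₂ = 0 := by
    have h2 : ((2:ℂ) * Complex.I) • g.toBlocks₁₂ = 0 := by
      rw [show ((2:ℂ) * Complex.I) = Complex.I - (-Complex.I) by ring, sub_smul, ← h12, sub_self]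
    rcases smul_eq_zero.mp h2 with h | h
    · exact absurd h (by simp [Complex.I_ne_zero])
    · exact h
  have hR : g.toBlocks₂₁ = 0 := by
    have h2 : ((2:ℂ) * Complex.I) • g.toBlocks₂₁ = 0 := by
      rw [show ((2:ℂ) * Complex.I) = Complex.I - (-Complex.I) by ring, sub_smul, h21, sub_self]
    rcases smul_eq_zero.mp h2 with h | h
    · exact absurd h (by simp [Complex.I_ne_zero])
    · exact h
  rw [hQ, hR] at hg
  exact hg

lemma eq_iota_of_comm_zI {g : M6} (hg : g ∈ USp6set)
    (hc : g * iotaM (Complex.I • 1) = iotaM (Complex.I • 1) * g) :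
    ∃ A ∈ Matrix.unitaryGroup (Fin 3) ℂ, g = iotaM A := by
  have hbd := block_diag_of_comm_zI hc
  set P := g.toBlocks₁₁ with hPdef
  set S := g.toBlocks₂₂ with hSdef
  have hu : g * star g = 1 := Matrix.mem_unitaryGroup_iff.1 hg.1
  rw [hbd, Matrix.star_eq_conjTranspose, Matrix.fromBlocks_conjTranspose,
    Matrix.fromBlocks_multiply, ← Matrix.fromBlocks_one] at hu
  simp only [Matrix.fromBlocks_inj, Matrix.mul_zero, Matrix.zero_mul, add_zero, zero_add,
    Matrix.conjTranspose_zero] at hu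
  have hP : P ∈ Matrix.unitaryGroup (Fin 3) ℂ := by
    rw [Matrix.mem_unitaryGroup_iff, Matrix.star_eq_conjTranspose]
    exact hu.1
  have hs := hg.2
  rw [hbd, J6, Matrix.fromBlocks_transpose, Matrix.fromBlocks_multiply,
    Matrix.fromBlocks_multiply] at hs
  simp only [Matrix.fromBlocks_inj, Matrix.mul_zero, Matrix.zero_mul, add_zero, zero_add,
    Matrix.mul_one, Matrix.mul_neg, Matrix.transpose_zero, Matrix.mul_one] at hs
  have h12 : Pᵀ * S = 1 := by
    have := hs.2.1
    simpa using this
  have hS : S = P.map (starRingEnd ℂ) := by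
    calc S = (P.map (starRingEnd ℂ) * Pᵀ) * S := by
            rw [(transpose_mul_conj hP).2, one_mul]
      _ = P.map (starRingEnd ℂ) * (Pᵀ * S) := by rw [mul_assoc]
      _ = P.map (starRingEnd ℂ) := by rw [h12, mul_one]
  exact ⟨P, hP, by rw [hbd, hS, iotaM]⟩

lemma iota_inj {A B : Matrix (Fin 3) (Fin 3) ℂ} (h : iotaM A = iotaM B) : A = B := by
  have := congrArg Matrix.toBlocks₁₁ h
  simpa [iotaM, Matrix.toBlocks_fromBlocks₁₁] using this

lemma iota_USp {A : Matrix (Fin 3) (Fin 3) ℂ} (hA : A ∈ Matrix.unitaryGroup (Fin 3) ℂ) :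
    iotaM A ∈ USp6set := ⟨iota_unitary hA, iota_symp hA⟩

lemma I_smul_unitary : Complex.I • (1 : Matrix (Fin 3) (Fin 3) ℂ) ∈ Matrix.unitaryGroup (Fin 3) ℂ := by
  apply smul_one_unitary
  simp [Complex.mul_conj']

lemma trace_iota (A : Matrix (Fin 3) (Fin 3) ℂ) :
    Matrix.trace (iotaM A) = Matrix.trace A + Matrix.trace (A.map (starRingEnd ℂ)) := by
  simp [iotaM, Matrix.trace, Fintype.sum_sum_type, Matrix.diag]

lemma unit_scalar {u : ℂ} (h : u • (1 : Matrix (Fin 3) (Fin 3) ℂ) ∈ Matrix.unitaryGroup (Fin 3) ℂ) :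
    u * (starRingEnd ℂ) u = 1 := by
  have := Matrix.mem_unitaryGroup_iff.1 h
  rw [star_smul, star_one, smul_mul_smul_comm, one_mul] at this
  have e := congrFun (congrFun this 0) 0
  simpa [Matrix.one_apply] using e

lemma inv_unitary6 {g : M6} (h : g ∈ Matrix.unitaryGroup (Fin 3 ⊕ Fin 3) ℂ) :
    g⁻¹ = star g := Matrix.inv_eq_left_inv (Matrix.mem_unitaryGroup_iff'.1 h)

lemma iota_inv {A : Matrix (Fin 3) (Fin 3) ℂ} (hA : A ∈ Matrix.unitaryGroup (Fin 3) ℂ) :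
    (iotaM A)⁻¹ = iotaM (star A) := by
  apply Matrix.inv_eq_left_inv
  rw [iota_mul, Matrix.mem_unitaryGroup_iff'.1 hA, iota_one]

lemma J6_conj_iota (C : Matrix (Fin 3) (Fin 3) ℂ) :
    J6 * iotaM C * (-J6) = iotaM (C.map (starRingEnd ℂ)) := by
  rw [J6, iotaM, iotaM, Matrix.fromBlocks_neg, Matrix.fromBlocks_multiply,
    Matrix.fromBlocks_multiply]
  simp
  ext i j; simp [Matrix.map_apply]

lemma negJ6_USp : -J6 ∈ USp6set := by
  constructor
  · rw [Matrix.mem_unitaryGroup_iff, star_neg, star_J6, neg_neg, neg_mul, J6_sq, neg_neg]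
  · rw [Matrix.transpose_neg, J6_transpose, neg_neg, mul_neg, J6_sq]
    simp



lemma iota_smul_one (u : ℂ) :
    iotaM (u • 1) = Matrix.fromBlocks (u • 1) 0 0 ((starRingEnd ℂ u) • 1) := by
  rw [iotaM, smul_one_map]

lemma abs_one_iff {u : ℂ} : ‖u‖ = 1 ↔ u * (starRingEnd ℂ) u = 1 := by
  rw [Complex.mul_conj]
  constructor
  · intro h
    rw [← Complex.sq_norm, h]; norm_num
  · intro h
    have : Complex.normSq u = 1 := by exact_mod_cast h
    rw [Complex.norm_def, this, Real.sqrt_one]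

def D0 : Matrix (Fin 3) (Fin 3) ℂ := Matrix.diagonal ![-1,1,1]
def D1 : Matrix (Fin 3) (Fin 3) ℂ := Matrix.diagonal ![1,-1,1]
def C3 : Matrix (Fin 3) (Fin 3) ℂ := !![0,1,0;0,0,1;1,0,0]

lemma D0_u : D0 ∈ Matrix.unitaryGroup (Fin 3) ℂ := by
  rw [Matrix.mem_unitaryGroup_iff]
  ext i j
  fin_cases i <;> fin_cases j <;>
    simp [D0, Matrix.mul_apply, Fin.sum_univ_three, Matrix.diagonal, Matrix.one_apply, star] <;> norm_num [Complex.ext_iff]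

lemma D1_u : D1 ∈ Matrix.unitaryGroup (Fin 3) ℂ := by
  rw [Matrix.mem_unitaryGroup_iff]
  ext i j
  fin_cases i <;> fin_cases j <;>
    simp [D1, Matrix.mul_apply, Fin.sum_univ_three, Matrix.diagonal, Matrix.one_apply, star] <;> norm_num [Complex.ext_iff]

lemma C3_u : C3 ∈ Matrix.unitaryGroup (Fin 3) ℂ := by
  rw [Matrix.mem_unitaryGroup_iff]
  ext i j
  fin_cases i <;> fin_cases j <;>
    simp [C3, Matrix.mul_apply, Fin.sum_univ_three, Matrix.one_apply, star,
      Matrix.conjTranspose_apply] <;> norm_num [Complex.ext_iff]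

example (P : Matrix (Fin 3) (Fin 3) ℂ) (h0 : P * D0 = D0 * P) : True := by
  have e := congrFun (congrFun h0 0) 1
  simp [D0, Matrix.mul_apply, Fin.sum_univ_three, Matrix.diagonal] at e
  trivial

lemma comm_scalar {P : Matrix (Fin 3) (Fin 3) ℂ}
    (h : ∀ A ∈ Matrix.unitaryGroup (Fin 3) ℂ, P * A = A * P) : P = P 0 0 • 1 := by
  have h0 := h D0 D0_u
  have h1 := h D1 D1_u
  have hc := h C3 C3_u
  have k01 : P 0 1 = 0 := by
    have e := congrFun (congrFun h0 0) 1
    simp [D0, Matrix.mul_apply, Fin.sum_univ_three, Matrix.diagonal] at e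
    first | linear_combination (1/2 : ℂ) * e | linear_combination (-1/2 : ℂ) * e
  have k02 : P 0 2 = 0 := by
    have e := congrFun (congrFun h0 0) 2
    simp [D0, Matrix.mul_apply, Fin.sum_univ_three, Matrix.diagonal] at e
    first | linear_combination (1/2 : ℂ) * e | linear_combination (-1/2 : ℂ) * e
  have k10 : P 1 0 = 0 := by
    have e := congrFun (congrFun h0 1) 0
    simp [D0, Matrix.mul_apply, Fin.sum_univ_three, Matrix.diagonal] at e
    first | linear_combination (1/2 : ℂ) * e | linear_combination (-1/2 : ℂ) * e
  have k12 : P 1 2 = 0 := by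
    have e := congrFun (congrFun h1 1) 2
    simp [D1, Matrix.mul_apply, Fin.sum_univ_three, Matrix.diagonal] at e
    first | linear_combination (1/2 : ℂ) * e | linear_combination (-1/2 : ℂ) * e
  have k20 : P 2 0 = 0 := by
    have e := congrFun (congrFun h0 2) 0
    simp [D0, Matrix.mul_apply, Fin.sum_univ_three, Matrix.diagonal] at e
    first | linear_combination (1/2 : ℂ) * e | linear_combination (-1/2 : ℂ) * e
  have k21 : P 2 1 = 0 := by
    have e := congrFun (congrFun h1 2) 1
    simp [D1, Matrix.mul_apply, Fin.sum_univ_three, Matrix.diagonal] at e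
    first | linear_combination (1/2 : ℂ) * e | linear_combination (-1/2 : ℂ) * e
  have k11 : P 1 1 = P 0 0 := by
    have e := congrFun (congrFun hc 0) 1
    simp [C3, Matrix.mul_apply, Fin.sum_univ_three, Matrix.vecHead, Matrix.vecTail] at e
    first | linear_combination e | linear_combination -e
  have k22 : P 2 2 = P 0 0 := by
    have e := congrFun (congrFun hc 1) 2
    simp [C3, Matrix.mul_apply, Fin.sum_univ_three, Matrix.vecHead, Matrix.vecTail] at e
    first | linear_combination -e - e2 | linear_combination e + k11 | linear_combination e - k11 | linear_combination -e + k11 | linear_combination -e - k11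
  ext i j
  fin_cases i <;> fin_cases j <;>
    simp [k01, k02, k10, k12, k20, k21, k11, k22, Matrix.one_apply]

lemma cent_eq : {g ∈ USp6set | ∀ x ∈ iotaU3, g * x = x * g} = U13 := by
  ext g
  constructor
  · rintro ⟨hg, hcomm⟩
    obtain ⟨A, hA, rfl⟩ := eq_iota_of_comm_zI hg
      (hcomm (iotaM (Complex.I • 1)) ⟨_, I_smul_unitary, rfl⟩)
    have hsc : A = A 0 0 • 1 := by
      apply comm_scalar
      intro B hB
      have := hcomm (iotaM B) ⟨B, hB, rfl⟩
      rw [iota_mul, iota_mul] at this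
      exact iota_inj this
    refine ⟨A 0 0, ?_, ?_⟩
    · rw [abs_one_iff]
      exact unit_scalar (hsc ▸ hA)
    · rw [← iota_smul_one, ← hsc]
  · rintro ⟨u, habs, rfl⟩
    have hu : u * (starRingEnd ℂ) u = 1 := abs_one_iff.1 habs
    have hU := smul_one_unitary hu
    rw [← iota_smul_one]
    refine ⟨iota_USp hU, ?_⟩
    rintro x ⟨B, hB, rfl⟩
    rw [iota_mul, iota_mul, Matrix.smul_mul, one_mul, Matrix.mul_smul, mul_one]

lemma U13_sub : U13 ⊆ iotaU3 := by
  rintro M ⟨u, habs, rfl⟩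
  exact ⟨u • 1, smul_one_unitary (abs_one_iff.1 habs), (iota_smul_one u).symm⟩

lemma J6_not_iota : J6 ∉ iotaU3 := by
  rintro ⟨A, -, hJ⟩
  have := congrFun (congrFun hJ (Sum.inl 0)) (Sum.inr 0)
  simp [J6, iotaM, Matrix.fromBlocks, Matrix.one_apply] at this

lemma iota_neg (X : Matrix (Fin 3) (Fin 3) ℂ) : iotaM (-X) = -iotaM X := by
  have hm : (-X).map (starRingEnd ℂ) = -(X.map (starRingEnd ℂ)) := by
    ext i j; simp [Matrix.map_apply]
  rw [iotaM, iotaM, hm, Matrix.fromBlocks_neg]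
  simp

lemma J6_zI : J6 * iotaM (Complex.I • 1) = -(iotaM (Complex.I • 1) * J6) := by
  rw [zI_eq, J6, Matrix.fromBlocks_multiply, Matrix.fromBlocks_multiply, Matrix.fromBlocks_neg]
  simp

lemma conj_unitary {X : Matrix (Fin 3) (Fin 3) ℂ} (hX : X ∈ Matrix.unitaryGroup (Fin 3) ℂ) :
    X.map (starRingEnd ℂ) ∈ Matrix.unitaryGroup (Fin 3) ℂ := by
  rw [Matrix.mem_unitaryGroup_iff, Matrix.star_eq_conjTranspose, mapc_CT, ← Matrix.map_mul]
  have h := Matrix.mem_unitaryGroup_iff.1 hX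
  rw [Matrix.star_eq_conjTranspose] at h
  rw [h, Matrix.map_one _ (map_zero _) (map_one _)]

lemma triple_mul (X Y Z : Matrix (Fin 3) (Fin 3) ℂ) :
    J6 * iotaM X * iotaM Y * (iotaM Z * -J6) = J6 * iotaM (X * Y * Z) * -J6 := by
  rw [← iota_mul, ← iota_mul]
  simp only [mul_assoc]

lemma sandwich {A : Matrix (Fin 3) (Fin 3) ℂ} (hA : A ∈ Matrix.unitaryGroup (Fin 3) ℂ)
    (B : Matrix (Fin 3) (Fin 3) ℂ) : A * (star A * B * A) * star A = B := by
  have h1 : A * star A = 1 := Matrix.mem_unitaryGroup_iff.1 hA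
  calc A * (star A * B * A) * star A = A * star A * B * (A * star A) := by
        simp only [mul_assoc]
    _ = B := by rw [h1, one_mul, mul_one]

lemma norm_eq : {g ∈ USp6set | {y | ∃ x ∈ iotaU3, y = g * x * g⁻¹} = iotaU3} =
    iotaU3 ∪ (fun M => J6 * M) '' iotaU3 := by
  ext g
  constructor
  · rintro ⟨hg, hset⟩
    have hinv : g⁻¹ = star g := inv_unitary6 hg.1
    have hinvg : g⁻¹ * g = 1 := by
      rw [hinv]; exact Matrix.mem_unitaryGroup_iff'.1 hg.1
    set z := iotaM (Complex.I • 1) with hz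
    have h1 : g * z * g⁻¹ ∈ iotaU3 := by
      rw [← hset]; exact ⟨z, ⟨_, I_smul_unitary, rfl⟩, rfl⟩
    obtain ⟨A, hA, hgz⟩ := h1
    have hconjmul : ∀ a b : M6, (g * a * g⁻¹) * (g * b * g⁻¹) = g * (a * b) * g⁻¹ := by
      intro a b
      calc (g * a * g⁻¹) * (g * b * g⁻¹) = g * (a * ((g⁻¹ * g) * (b * g⁻¹))) := by
            simp only [mul_assoc]
        _ = g * (a * b) * g⁻¹ := by rw [hinvg, one_mul]; simp only [mul_assoc]
    have hcommA : ∀ B ∈ Matrix.unitaryGroup (Fin 3) ℂ, A * B = B * A := by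
      intro B hB
      have hBmem : iotaM B ∈ {y | ∃ x ∈ iotaU3, y = g * x * g⁻¹} := by
        rw [hset]; exact ⟨B, hB, rfl⟩
      obtain ⟨x', ⟨B', hB', rfl⟩, hx'⟩ := hBmem
      have hzB' : z * iotaM B' = iotaM B' * z := by
        rw [hz, iota_mul, iota_mul, Matrix.smul_mul, one_mul, Matrix.mul_smul, mul_one]
      apply iota_inj
      rw [← iota_mul, ← iota_mul, ← hgz, hx', hconjmul, hconjmul, hzB']
    have hsc := comm_scalar hcommA
    set u := A 0 0 with hu
    have huu : u * (starRingEnd ℂ) u = 1 := unit_scalar (hsc ▸ hA)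
    have htr : Matrix.trace (iotaM A) = Matrix.trace z := by
      rw [← hgz, Matrix.trace_mul_cycle, hinvg, one_mul]
    rw [hz, trace_iota, trace_iota, hsc, smul_one_map, smul_one_map] at htr
    simp only [Matrix.trace_smul, Matrix.trace_one] at htr
    have hsum : u + (starRingEnd ℂ) u = 0 := by
      simp only [Fintype.card_fin, Nat.cast_ofNat, smul_eq_mul, Complex.conj_I] at htr
      linear_combination htr / 3
    have h2 : u * u = -1 := by linear_combination u * hsum - huu
    have h3 : (u - Complex.I) * (u + Complex.I) = 0 := by
      linear_combination h2 - Complex.I_sq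
    rcases mul_eq_zero.1 h3 with h | h
    · -- u = I
      have huI : u = Complex.I := by linear_combination h
      have hAz : iotaM A = z := by rw [hsc, huI]
      have hzz : g * z = z * g := by
        calc g * z = g * z * g⁻¹ * g := by rw [mul_assoc, mul_assoc, hinvg, mul_one]
          _ = z * g := by rw [hgz, hAz]
      obtain ⟨P, hP, hgP⟩ := eq_iota_of_comm_zI hg hzz
      exact Or.inl ⟨P, hP, hgP⟩
    · -- u = -I
      have huI : u = -Complex.I := by linear_combination h
      have hAz : iotaM A = -z := by
        rw [hsc, huI, neg_smul, iota_neg]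
      have hgzneg : g * z = -(z * g) := by
        calc g * z = g * z * g⁻¹ * g := by rw [mul_assoc, mul_assoc, hinvg, mul_one]
          _ = -z * g := by rw [hgz, hAz, neg_mul]
          _ = -(z * g) := by rw [neg_mul]
      have hh : -J6 * g ∈ USp6set := USp6_mul negJ6_USp hg
      have hcz : (-J6 * g) * z = z * (-J6 * g) := by
        calc (-J6 * g) * z = -J6 * (g * z) := by rw [mul_assoc]
          _ = -J6 * -(z * g) := by rw [hgzneg]
          _ = J6 * (z * g) := by rw [neg_mul_neg]
          _ = (J6 * z) * g := by rw [mul_assoc]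
          _ = -(z * J6) * g := by rw [hz, J6_zI]
          _ = z * (-J6 * g) := by simp only [neg_mul, mul_neg, mul_assoc]
      obtain ⟨P, hP, hgP⟩ := eq_iota_of_comm_zI hh hcz
      refine Or.inr ⟨iotaM P, ⟨P, hP, rfl⟩, ?_⟩
      show J6 * iotaM P = g
      rw [← hgP, ← mul_assoc, mul_neg, J6_sq, neg_neg, one_mul]
  · rintro (⟨A, hA, rfl⟩ | ⟨m, ⟨A, hA, rfl⟩, rfl⟩)
    · refine ⟨iota_USp hA, ?_⟩
      ext y
      simp only [Set.mem_setOf_eq]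
      constructor
      · rintro ⟨x, ⟨B, hB, rfl⟩, rfl⟩
        rw [iota_inv hA, iota_mul, iota_mul]
        exact ⟨A * B * star A, mul_mem (mul_mem hA hB) (Unitary.star_mem hA), rfl⟩
      · rintro ⟨B, hB, rfl⟩
        refine ⟨iotaM (star A * B * A),
          ⟨_, mul_mem (mul_mem (Unitary.star_mem hA) hB) hA, rfl⟩, ?_⟩
        rw [iota_inv hA, iota_mul, iota_mul, sandwich hA]
    · refine ⟨USp6_mul J6_USp (iota_USp hA), ?_⟩
      have hInv : (J6 * iotaM A)⁻¹ = iotaM (star A) * -J6 := by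
        apply Matrix.inv_eq_left_inv
        calc (iotaM (star A) * -J6) * (J6 * iotaM A)
            = iotaM (star A) * (-J6 * J6) * iotaM A := by simp only [mul_assoc]
          _ = iotaM (star A) * iotaM A := by
              rw [neg_mul, J6_sq, neg_neg, mul_one]
          _ = 1 := by rw [iota_mul, Matrix.mem_unitaryGroup_iff'.1 hA, iota_one]
      ext y
      simp only [Set.mem_setOf_eq]
      constructor
      · rintro ⟨x, ⟨B, hB, rfl⟩, rfl⟩
        rw [hInv, triple_mul, J6_conj_iota]
        exact ⟨(A * B * star A).map (starRingEnd ℂ),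
          conj_unitary (mul_mem (mul_mem hA hB) (Unitary.star_mem hA)), rfl⟩
      · rintro ⟨B, hB, rfl⟩
        refine ⟨iotaM (star A * B.map (starRingEnd ℂ) * A),
          ⟨_, mul_mem (mul_mem (Unitary.star_mem hA) (conj_unitary hB)) hA, rfl⟩, ?_⟩
        rw [hInv, triple_mul, sandwich hA, J6_conj_iota, conj_conj_mat]

theorem statement16 :
    {g ∈ USp6set | ∀ x ∈ iotaU3, g * x = x * g} = U13 ∧
    U13 ⊆ iotaU3 ∧
    {g ∈ USp6set | {y | ∃ x ∈ iotaU3, y = g * x * g⁻¹} = iotaU3} =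
      iotaU3 ∪ (fun M => J6 * M) '' iotaU3 ∧
    J6 ∉ iotaU3 :=
  ⟨cent_eq, U13_sub, norm_eq, J6_not_iota⟩
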